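/- In the setting of the inductively defined paths P_{u,v} (with l_{u,v} the minimal number of initial inserted edges needed for a u → v path), let s,t be vertices with l_{s,t} ≥ 1. Then an s → t path exists in G₀ ∪ {e₁,...,e_k} if and only if there exists an index i ∈ {1,...,k} with l_{s,u_i} < i and l_{v_i,t} < i. Moreover, if i is the minimal such index, then l_{s,t} = i, i.e., P_{s,t} = P_{s,u_i} · e_i · P_{v_i,t}. -/

import Mathlib

/-- `p` is a walk in `E` from `a` to `b` (as its full list of vertices). -/
def IsWalkList {V : Type*} (E : V → V → Prop) (p : List V) (a b : V) : Prop :=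
  p.head? = some a ∧ p.getLast? = some b ∧ List.Chain' E p

/-- Index `i` (representing the inserted edge number `i+1`) is *good* for the pair
`(s,t)`: `l_{s,u_{i+1}} < i+1` and `l_{v_{i+1},t} < i+1` (both being defined). -/
def GoodIdx {V : Type*} (El : ℕ → V → V → Prop) (lfun : V → V → ℕ) {k : ℕ}
    (eu ev : Fin k → V) (s t : V) (i : Fin k) : Prop :=
  ((∃ l ≤ k, Relation.ReflTransGen (El l) s (eu i)) ∧ lfun s (eu i) < (i : ℕ) + 1) ∧
  ((∃ l ≤ k, Relation.ReflTransGen (El l) (ev i) t) ∧ lfun (ev i) t < (i : ℕ) + 1)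

/-- in the setting of the inductively defined paths `P`, for vertices
`s, t` with `l_{s,t} ≥ 1` (i.e. no `s → t` path in `G₀`): an `s → t` path exists in
`G₀ ∪ {e₁,…,e_k}` iff some index is good; moreover for the minimal good index `i`,
`l_{s,t} = i + 1`, i.e. `P s t = P s (eu i) ++ P (ev i) t`. -/
theorem first_useful_insertion
    {V : Type*} (E0 : V → V → Prop) (k : ℕ) (eu ev : Fin k → V)
    (El : ℕ → V → V → Prop)
    (hEl : ∀ (l : ℕ) (x y : V), El l x y ↔
      (E0 x y ∨ ∃ i : Fin k, (i : ℕ) < l ∧ eu i = x ∧ ev i = y))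
    (lfun : V → V → ℕ)
    (hlmin : ∀ u v, (∃ l ≤ k, Relation.ReflTransGen (El l) u v) →
      (lfun u v ≤ k ∧ Relation.ReflTransGen (El (lfun u v)) u v ∧
       ∀ l', Relation.ReflTransGen (El l') u v → lfun u v ≤ l'))
    (P : V → V → List V)
    (hbase : ∀ u v, (∃ l ≤ k, Relation.ReflTransGen (El l) u v) → lfun u v = 0 →
      IsWalkList E0 (P u v) u v ∧ (P u v).Nodup)
    (hind : ∀ u v, (∃ l ≤ k, Relation.ReflTransGen (El l) u v) → 1 ≤ lfun u v →
      ∃ i : Fin k, (i : ℕ) + 1 = lfun u v ∧ P u v = P u (eu i) ++ P (ev i) v)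
    (s t : V) (hst : ¬ Relation.ReflTransGen (El 0) s t) :
    (Relation.ReflTransGen (El k) s t ↔ ∃ i : Fin k, GoodIdx El lfun eu ev s t i) ∧
    (∀ i : Fin k, GoodIdx El lfun eu ev s t i →
      (∀ j : Fin k, GoodIdx El lfun eu ev s t j → (i : ℕ) ≤ (j : ℕ)) →
      lfun s t = (i : ℕ) + 1 ∧ P s t = P s (eu i) ++ P (ev i) t) := by
  classical
  have hmonoE : ∀ {l l' : ℕ}, l ≤ l' → ∀ {x y : V}, El l x y → El l' x y := by
    intro l l' hll x y hxy
    rw [hEl] at hxy ⊢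
    rcases hxy with h | ⟨i, hi, h1, h2⟩
    · exact Or.inl h
    · exact Or.inr ⟨i, lt_of_lt_of_le hi hll, h1, h2⟩
  have hmono : ∀ {l l' : ℕ}, l ≤ l' → ∀ {x y : V}, Relation.ReflTransGen (El l) x y →
      Relation.ReflTransGen (El l') x y :=
    by intro l l' hll x y h; exact Relation.ReflTransGen.mono (fun a b (hab : El l a b) => hmonoE hll hab) _ _ h
  have hsplit : ∀ (n : ℕ) (x y : V), Relation.ReflTransGen (El (n+1)) x y →
      Relation.ReflTransGen (El n) x y ∨
      ∃ j : Fin k, (j : ℕ) = n ∧ Relation.ReflTransGen (El n) x (eu j) ∧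
        Relation.ReflTransGen (El n) (ev j) y := by
    intro n x y h
    induction h with
    | refl => exact Or.inl .refl
    | tail h₁ hedge ih =>
      rename_i c d
      rw [hEl] at hedge
      have hcase : El n c d ∨ ∃ j : Fin k, (j : ℕ) = n ∧ eu j = c ∧ ev j = d := by
        rcases hedge with h | ⟨j, hj, h1, h2⟩
        · exact Or.inl ((hEl n c d).2 (Or.inl h))
        · rcases Nat.lt_succ_iff_lt_or_eq.1 hj with hj' | hj'
          · exact Or.inl ((hEl n c d).2 (Or.inr ⟨j, hj', h1, h2⟩))
          · exact Or.inr ⟨j, hj', h1, h2⟩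
      rcases hcase with hcd | ⟨j, hj, hu, hv⟩
      · rcases ih with h | ⟨j, hj, h1, h2⟩
        · exact Or.inl (h.tail hcd)
        · exact Or.inr ⟨j, hj, h1, h2.tail hcd⟩
      · refine Or.inr ⟨j, hj, ?_, hv ▸ .refl⟩
        rcases ih with h | ⟨j', hj', h1, h2⟩
        · exact hu ▸ h
        · have hjj : j' = j := Fin.ext (hj'.trans hj.symm)
          exact hjj ▸ h1
  have hgood_reach : ∀ i : Fin k, GoodIdx El lfun eu ev s t i →
      Relation.ReflTransGen (El ((i : ℕ) + 1)) s t := by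
    intro i hi
    obtain ⟨⟨hex1, hl1⟩, ⟨hex2, hl2⟩⟩ := hi
    have h1 := (hlmin s (eu i) hex1).2.1
    have h2 := (hlmin (ev i) t hex2).2.1
    have hedge : El ((i : ℕ) + 1) (eu i) (ev i) :=
      (hEl _ _ _).2 (Or.inr ⟨i, by omega, rfl, rfl⟩)
    exact ((hmono (le_of_lt hl1) h1).tail hedge).trans (hmono (le_of_lt hl2) h2)
  have hkey : (∃ l ≤ k, Relation.ReflTransGen (El l) s t) →
      ∃ j : Fin k, GoodIdx El lfun eu ev s t j ∧ lfun s t = (j : ℕ) + 1 ∧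
        P s t = P s (eu j) ++ P (ev j) t := by
    intro hex
    obtain ⟨hk', hreach, hminl⟩ := hlmin s t hex
    have hL1 : 1 ≤ lfun s t := by
      rcases Nat.eq_zero_or_pos (lfun s t) with h | h
      · exact absurd (h ▸ hreach) hst
      · exact h
    obtain ⟨j, hjL, hP⟩ := hind s t hex hL1
    have hreach' : Relation.ReflTransGen (El ((j : ℕ) + 1)) s t := hjL ▸ hreach
    have hnot : ¬ Relation.ReflTransGen (El (j : ℕ)) s t := by
      intro h
      have := hminl _ h
      omega
    rcases hsplit (j : ℕ) s t hreach' with h | ⟨j', hj', ha, hb⟩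
    · exact absurd h hnot
    have hjj : j' = j := Fin.ext hj'
    subst hjj
    have hexa : ∃ l ≤ k, Relation.ReflTransGen (El l) s (eu j') :=
      ⟨(j' : ℕ), j'.isLt.le, ha⟩
    have hexb : ∃ l ≤ k, Relation.ReflTransGen (El l) (ev j') t :=
      ⟨(j' : ℕ), j'.isLt.le, hb⟩
    have hga : lfun s (eu j') < (j' : ℕ) + 1 :=
      Nat.lt_succ_of_le ((hlmin s (eu j') hexa).2.2 _ ha)
    have hgb : lfun (ev j') t < (j' : ℕ) + 1 :=
      Nat.lt_succ_of_le ((hlmin (ev j') t hexb).2.2 _ hb)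
    exact ⟨j', ⟨⟨hexa, hga⟩, ⟨hexb, hgb⟩⟩, hjL.symm, hP⟩
  constructor
  · constructor
    · intro h
      obtain ⟨j, hj, _⟩ := hkey ⟨k, le_refl k, h⟩
      exact ⟨j, hj⟩
    · rintro ⟨i, hi⟩
      exact hmono i.isLt (hgood_reach i hi)
  · intro i hi hminI
    have hex : ∃ l ≤ k, Relation.ReflTransGen (El l) s t :=
      ⟨k, le_refl k, hmono i.isLt (hgood_reach i hi)⟩
    obtain ⟨j, hj, hjL, hP⟩ := hkey hex
    have h1 : (i : ℕ) ≤ (j : ℕ) := hminI j hj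
    have h2 : lfun s t ≤ (i : ℕ) + 1 := (hlmin s t hex).2.2 _ (hgood_reach i hi)
    have hij : i = j := Fin.ext (by omega)
    subst hij
    exact ⟨hjL, hP⟩
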